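/- arXiv:2504.06030 — 3 statements merged into one kernel-verified Lean document; each statement's English description precedes it below -/
import Mathlib

section
/- Let f(u) = 2(E + μu − (u²/2)(C − Bu)²) with B ≠ 0. Then u is a root of f if and only if u ∈ { (1/(2B))(C + B√λ ± √(C² − B²λ + 4μ/√λ)), (1/(2B))(C − B√λ ± √(C² − B²λ − 4μ/√λ)) } whenever λ > 0 is a real root of the resolvent cubic λ³ − (C²/B²)λ² + (4/B³)(μC + 2BE)λ − 4μ²/B⁴ = 0 (all square roots taken in ℂ). -/
lemma cpow_half_sq (z : ℂ) : (z ^ ((1:ℂ)/2)) ^ 2 = z := by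
  rcases eq_or_ne z 0 with rfl | hz
  · rw [Complex.zero_cpow (by norm_num)]; ring
  · rw [sq, ← Complex.cpow_add _ _ hz]; norm_num

theorem stmt_5 (B C E μ : ℝ) (hB : B ≠ 0) (l : ℝ) (hl : 0 < l)
    (hcubic : l ^ 3 - (C ^ 2 / B ^ 2) * l ^ 2
      + (4 / B ^ 3) * (μ * C + 2 * B * E) * l - 4 * μ ^ 2 / B ^ 4 = 0) :
    ∀ u : ℂ,
      2 * (E : ℂ) + 2 * (μ : ℂ) * u - u ^ 2 * ((C : ℂ) - (B : ℂ) * u) ^ 2 = 0 ↔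
      u ∈ ({(1 / (2 * (B : ℂ))) * ((C : ℂ) + (B : ℂ) * (Real.sqrt l : ℂ)
              + ((C ^ 2 - B ^ 2 * l + 4 * μ / Real.sqrt l : ℝ) : ℂ) ^ ((1 : ℂ) / 2)),
            (1 / (2 * (B : ℂ))) * ((C : ℂ) + (B : ℂ) * (Real.sqrt l : ℂ)
              - ((C ^ 2 - B ^ 2 * l + 4 * μ / Real.sqrt l : ℝ) : ℂ) ^ ((1 : ℂ) / 2)),
            (1 / (2 * (B : ℂ))) * ((C : ℂ) - (B : ℂ) * (Real.sqrt l : ℂ)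
              + ((C ^ 2 - B ^ 2 * l - 4 * μ / Real.sqrt l : ℝ) : ℂ) ^ ((1 : ℂ) / 2)),
            (1 / (2 * (B : ℂ))) * ((C : ℂ) - (B : ℂ) * (Real.sqrt l : ℂ)
              - ((C ^ 2 - B ^ 2 * l - 4 * μ / Real.sqrt l : ℝ) : ℂ) ^ ((1 : ℂ) / 2))} : Set ℂ) := by
  intro u
  set s : ℝ := Real.sqrt l with hs_def
  have hs0 : 0 < s := Real.sqrt_pos.mpr hl
  have hs2 : s ^ 2 = l := Real.sq_sqrt hl.le
  have hsne : (s : ℂ) ≠ 0 := by exact_mod_cast hs0.ne'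
  have hBc : (B : ℂ) ≠ 0 := by exact_mod_cast hB
  set A : ℂ := ((C ^ 2 - B ^ 2 * l + 4 * μ / s : ℝ) : ℂ) ^ ((1 : ℂ) / 2) with hA_def
  set D : ℂ := ((C ^ 2 - B ^ 2 * l - 4 * μ / s : ℝ) : ℂ) ^ ((1 : ℂ) / 2) with hD_def
  have hA2 : (s : ℂ) * A ^ 2 = (s : ℂ) * ((C:ℂ) ^ 2 - (B:ℂ) ^ 2 * (s:ℂ) ^ 2) + 4 * (μ:ℂ) := by
    rw [hA_def, cpow_half_sq]
    push_cast [← hs2]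
    field_simp
  have hD2 : (s : ℂ) * D ^ 2 = (s : ℂ) * ((C:ℂ) ^ 2 - (B:ℂ) ^ 2 * (s:ℂ) ^ 2) - 4 * (μ:ℂ) := by
    rw [hD_def, cpow_half_sq]
    push_cast [← hs2]
    field_simp
  have hcubR : B ^ 4 * s ^ 6 - B ^ 2 * C ^ 2 * s ^ 4
      + 4 * B * (μ * C + 2 * B * E) * s ^ 2 - 4 * μ ^ 2 = 0 := by
    have h : s ^ 6 = l ^ 3 := by rw [← hs2]; ring
    have h2 : s ^ 4 = l ^ 2 := by rw [← hs2]; ring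
    rw [h, h2, hs2]
    field_simp at hcubic
    have h6 : B ^ 5 * (B ^ 4 * l ^ 3 - B ^ 2 * C ^ 2 * l ^ 2
        + 4 * B * (μ * C + 2 * B * E) * l - 4 * μ ^ 2) = 0 := by linear_combination B ^ 5 * hcubic
    rcases mul_eq_zero.mp h6 with h7 | h7
    · exact absurd h7 (pow_ne_zero _ hB)
    · exact h7
  have hcubC : (B:ℂ) ^ 4 * (s:ℂ) ^ 6 - (B:ℂ) ^ 2 * (C:ℂ) ^ 2 * (s:ℂ) ^ 4
      + 4 * (B:ℂ) * ((μ:ℂ) * (C:ℂ) + 2 * (B:ℂ) * (E:ℂ)) * (s:ℂ) ^ 2 - 4 * (μ:ℂ) ^ 2 = 0 := by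
    exact_mod_cast congrArg (Complex.ofReal) hcubR
  have key : (s:ℂ) ^ 2 * 16 * (B:ℂ) ^ 2 *
      (2 * (E : ℂ) + 2 * (μ : ℂ) * u - u ^ 2 * ((C : ℂ) - (B : ℂ) * u) ^ 2)
      = -((s:ℂ) ^ 2) * ((2*(B:ℂ)*u - (C:ℂ) - (B:ℂ)*(s:ℂ)) ^ 2 - A ^ 2)
        * ((2*(B:ℂ)*u - (C:ℂ) + (B:ℂ)*(s:ℂ)) ^ 2 - D ^ 2) := by
    linear_combination ((s:ℂ) * D ^ 2 - (s:ℂ) * (2*(B:ℂ)*u - (C:ℂ) + (B:ℂ)*(s:ℂ)) ^ 2) * hA2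
      - ((s:ℂ) * (2*(B:ℂ)*u - (C:ℂ) - (B:ℂ)*(s:ℂ)) ^ 2
          - (s:ℂ) * ((C:ℂ) ^ 2 - (B:ℂ) ^ 2 * (s:ℂ) ^ 2) - 4 * (μ:ℂ)) * hD2
      + 4 * hcubC
  have h16 : (s:ℂ) ^ 2 * 16 * (B:ℂ) ^ 2 ≠ 0 := by
    simp [hsne, hBc]
  simp only [Set.mem_insert_iff, Set.mem_singleton_iff]
  constructor
  · intro h
    have h2 : ((2*(B:ℂ)*u - (C:ℂ) - (B:ℂ)*(s:ℂ)) ^ 2 - A ^ 2)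
        * ((2*(B:ℂ)*u - (C:ℂ) + (B:ℂ)*(s:ℂ)) ^ 2 - D ^ 2) = 0 := by
      have h3 := key
      rw [h, mul_zero] at h3
      have h4 : (s:ℂ) ^ 2 * (((2*(B:ℂ)*u - (C:ℂ) - (B:ℂ)*(s:ℂ)) ^ 2 - A ^ 2)
          * ((2*(B:ℂ)*u - (C:ℂ) + (B:ℂ)*(s:ℂ)) ^ 2 - D ^ 2)) = 0 := by linear_combination h3
      rcases mul_eq_zero.mp h4 with h5 | h5
      · exact absurd h5 (pow_ne_zero 2 hsne)
      · exact h5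
    rw [mul_eq_zero] at h2
    rcases h2 with h2 | h2
    · have h3 : (2*(B:ℂ)*u - (C:ℂ) - (B:ℂ)*(s:ℂ) - A)
          * (2*(B:ℂ)*u - (C:ℂ) - (B:ℂ)*(s:ℂ) + A) = 0 := by linear_combination h2
      rw [mul_eq_zero] at h3
      rcases h3 with h3 | h3
      · left; field_simp; linear_combination h3
      · right; left; field_simp; linear_combination h3
    · have h3 : (2*(B:ℂ)*u - (C:ℂ) + (B:ℂ)*(s:ℂ) - D)
          * (2*(B:ℂ)*u - (C:ℂ) + (B:ℂ)*(s:ℂ) + D) = 0 := by linear_combination h2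
      rw [mul_eq_zero] at h3
      rcases h3 with h3 | h3
      · right; right; left; field_simp; linear_combination h3
      · right; right; right; field_simp; linear_combination h3
  · intro h
    have goal0 : (s:ℂ) ^ 2 * 16 * (B:ℂ) ^ 2 *
        (2 * (E : ℂ) + 2 * (μ : ℂ) * u - u ^ 2 * ((C : ℂ) - (B : ℂ) * u) ^ 2) = 0 := by
      rw [key]
      rcases h with h | h | h | h <;> rw [h] <;> field_simp <;> ring
    rcases mul_eq_zero.mp goal0 with h' | h'
    · exact absurd h' h16
    · exact h'
end

section
/- Define R(ξ,η) = −(μ/λ)·r + (λ/2)·log(x²+y²) + σ²·arctan(y/x) and S(ξ,η) analogously with S = λ·arctan(y/x) − (σ²/2)·log(x²+y²), where r = √(x²+y²+z²). Then for the vector field v = ∇R + ∇S the radial coordinate r(t) along any solution of dX/dt = v(X) satisfies dr/dt = (λ(λ−σ²) − μr)/(λr). In particular r(t) → r_c := λ(λ−σ²)/μ as t → ∞ whenever r(0) > 0, μ > 0, 0 < σ² < λ. -/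
/-- Partial derivative in the `i`-th coordinate. -/
noncomputable def pd (i : Fin 3) (f : (Fin 3 → ℝ) → ℝ) (x : Fin 3 → ℝ) : ℝ :=
  deriv (fun s => f (Function.update x i s)) (x i)

noncomputable def norm3 (v : Fin 3 → ℝ) : ℝ :=
  Real.sqrt (v 0 ^ 2 + v 1 ^ 2 + v 2 ^ 2)

open Filter Real
lemma arctan_div_not_cont {a : ℝ} (ha : a ≠ 0) :
    ¬ ContinuousAt (fun s => Real.arctan (a / s)) 0 := by
  intro h
  have ht := h.tendsto
  simp only [div_zero, Real.arctan_zero] at ht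
  have hseq : Tendsto (fun n : ℕ => a / (n + 1)) atTop (nhds 0) := by
    have h2 : Tendsto (fun n : ℕ => (n:ℝ) + 1) atTop atTop :=
      tendsto_natCast_atTop_atTop.atTop_add tendsto_const_nhds
    exact Tendsto.div_atTop tendsto_const_nhds h2
  have hc := ht.comp hseq
  have heq : ∀ n : ℕ, Real.arctan (a / (a / (n + 1))) = Real.arctan (n + 1) := by
    intro n; congr 1; field_simp
  have hc' : Tendsto (fun n : ℕ => Real.arctan ((n:ℝ) + 1)) atTop (nhds 0) := by
    have : ((fun s => Real.arctan (a / s)) ∘ fun n : ℕ => a / (n + 1)) =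
        fun n : ℕ => Real.arctan ((n:ℝ) + 1) := by
      funext n; exact heq n
    rwa [this] at hc
  have hev := hc'.eventually (eventually_lt_nhds (show (0:ℝ) < Real.pi/4 by positivity))
  rcases hev.exists with ⟨n, hn⟩
  have : Real.pi / 4 ≤ Real.arctan ((n:ℝ) + 1) := by
    rw [← Real.arctan_one]
    exact Real.arctan_strictMono.monotone (by norm_num)
  linarith

lemma alg {a b cc n lam μ σ : ℝ} (hn : n ≠ 0) (hp : a^2+b^2 ≠ 0) (hlam : lam ≠ 0)
    (hn2 : n ^ 2 = a^2+b^2+cc^2) :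
    a * ((-(μ/lam) * (a/n) + lam*a/(a^2+b^2) - σ^2*b/(a^2+b^2)) + (-(lam*b)/(a^2+b^2) - σ^2*a/(a^2+b^2)))
    + b * ((-(μ/lam) * (b/n) + lam*b/(a^2+b^2) + σ^2*a/(a^2+b^2)) + (lam*a/(a^2+b^2) - σ^2*b/(a^2+b^2)))
    + cc * (-(μ/lam) * (cc/n) + 0)
    = (lam - σ^2) - (μ/lam)*n := by
  have hcc : cc^2 = n^2 - a^2 - b^2 := by linarith
  have hstep : cc * (-(μ/lam) * (cc/n) + 0) = -(μ/lam) * ((n^2 - a^2 - b^2)/n) := by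
    rw [← hcc]; ring
  rw [hstep]
  field_simp
  ring

lemma alg0 {b cc n lam μ σ : ℝ} (hn : n ≠ 0) (hb : b ≠ 0) (hlam : lam ≠ 0)
    (hn2 : n ^ 2 = 0^2+b^2+cc^2) :
    (0:ℝ) * ((0:ℝ) + 0)
    + b * ((-(μ/lam) * (b/n) + lam*b/(0^2+b^2) + σ^2*0/(0^2+b^2)) + (lam*0/(0^2+b^2) - σ^2*b/(0^2+b^2)))
    + cc * (-(μ/lam) * (cc/n) + 0)
    = (lam - σ^2) - (μ/lam)*n := by
  have hcc : cc^2 = n^2 - b^2 := by nlinarith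
  have hstep : cc * (-(μ/lam) * (cc/n) + 0) = -(μ/lam) * ((n^2 - b^2)/n) := by
    rw [← hcc]; ring
  rw [hstep]
  field_simp
  ring

section
variable {μ lam σ : ℝ} {R S : (Fin 3 → ℝ) → ℝ}

lemma pd0R (hR : ∀ x : Fin 3 → ℝ, R x = -(μ / lam) * norm3 x
      + (lam / 2) * Real.log (x 0 ^ 2 + x 1 ^ 2)
      + σ ^ 2 * Real.arctan (x 1 / x 0)) (x : Fin 3 → ℝ) (ha : x 0 ≠ 0) :
    pd 0 R x = -(μ / lam) * (x 0 / norm3 x) + lam * x 0 / (x 0 ^ 2 + x 1 ^ 2)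
      - σ ^ 2 * x 1 / (x 0 ^ 2 + x 1 ^ 2) := by
  have hp : x 0 ^ 2 + x 1 ^ 2 ≠ 0 := by positivity
  have hq : x 0 ^ 2 + x 1 ^ 2 + x 2 ^ 2 ≠ 0 := by positivity
  have hsq : Real.sqrt (x 0 ^ 2 + x 1 ^ 2 + x 2 ^ 2) ≠ 0 := by
    simpa [Real.sqrt_eq_zero'] using lt_of_le_of_ne (by positivity) (Ne.symm hq)
  have hfun : (fun s => R (Function.update x 0 s)) = fun s =>
      -(μ / lam) * Real.sqrt (s ^ 2 + x 1 ^ 2 + x 2 ^ 2)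
      + (lam / 2) * Real.log (s ^ 2 + x 1 ^ 2)
      + σ ^ 2 * Real.arctan (x 1 / s) := by
    funext s; rw [hR]; simp [norm3]
  rw [pd, hfun]
  have h1 : HasDerivAt (fun s : ℝ => s ^ 2 + x 1 ^ 2 + x 2 ^ 2) (2 * x 0) (x 0) := by
    simpa using ((hasDerivAt_pow 2 (x 0)).add_const (x 1 ^ 2)).add_const (x 2 ^ 2)
  have h2 : HasDerivAt (fun s : ℝ => s ^ 2 + x 1 ^ 2) (2 * x 0) (x 0) := by
    simpa using (hasDerivAt_pow 2 (x 0)).add_const (x 1 ^ 2)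
  have h3 : HasDerivAt (fun s : ℝ => x 1 / s) (x 1 * (-(x 0 ^ 2)⁻¹)) (x 0) := by
    simpa [div_eq_mul_inv] using (hasDerivAt_inv ha).const_mul (x 1)
  have hd : HasDerivAt (fun s =>
      -(μ / lam) * Real.sqrt (s ^ 2 + x 1 ^ 2 + x 2 ^ 2)
      + (lam / 2) * Real.log (s ^ 2 + x 1 ^ 2)
      + σ ^ 2 * Real.arctan (x 1 / s))
      (-(μ / lam) * (2 * x 0 / (2 * Real.sqrt (x 0 ^ 2 + x 1 ^ 2 + x 2 ^ 2)))
       + (lam / 2) * (2 * x 0 / (x 0 ^ 2 + x 1 ^ 2))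
       + σ ^ 2 * (1 / (1 + (x 1 / x 0) ^ 2) * (x 1 * (-(x 0 ^ 2)⁻¹)))) (x 0) :=
    (((h1.sqrt hq).const_mul _).add ((h2.log hp).const_mul _)).add (h3.arctan.const_mul _)
  rw [hd.deriv, norm3]
  have h1px : 1 + (x 1 / x 0) ^ 2 ≠ 0 := by positivity
  field_simp
  ring

lemma pd0S (hS : ∀ x : Fin 3 → ℝ, S x = lam * Real.arctan (x 1 / x 0)
      - (σ ^ 2 / 2) * Real.log (x 0 ^ 2 + x 1 ^ 2)) (x : Fin 3 → ℝ) (ha : x 0 ≠ 0) :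
    pd 0 S x = -(lam * x 1) / (x 0 ^ 2 + x 1 ^ 2) - σ ^ 2 * x 0 / (x 0 ^ 2 + x 1 ^ 2) := by
  have hp : x 0 ^ 2 + x 1 ^ 2 ≠ 0 := by positivity
  have hfun : (fun s => S (Function.update x 0 s)) = fun s =>
      lam * Real.arctan (x 1 / s) - (σ ^ 2 / 2) * Real.log (s ^ 2 + x 1 ^ 2) := by
    funext s; rw [hS]; simp
  rw [pd, hfun]
  have h2 : HasDerivAt (fun s : ℝ => s ^ 2 + x 1 ^ 2) (2 * x 0) (x 0) := by
    simpa using (hasDerivAt_pow 2 (x 0)).add_const (x 1 ^ 2)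
  have h3 : HasDerivAt (fun s : ℝ => x 1 / s) (x 1 * (-(x 0 ^ 2)⁻¹)) (x 0) := by
    simpa [div_eq_mul_inv] using (hasDerivAt_inv ha).const_mul (x 1)
  have hd : HasDerivAt (fun s =>
      lam * Real.arctan (x 1 / s) - (σ ^ 2 / 2) * Real.log (s ^ 2 + x 1 ^ 2))
      (lam * (1 / (1 + (x 1 / x 0) ^ 2) * (x 1 * (-(x 0 ^ 2)⁻¹)))
       - (σ ^ 2 / 2) * (2 * x 0 / (x 0 ^ 2 + x 1 ^ 2))) (x 0) :=
    (h3.arctan.const_mul _).sub ((h2.log hp).const_mul _)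
  rw [hd.deriv]
  have h1px : 1 + (x 1 / x 0) ^ 2 ≠ 0 := by positivity
  field_simp

lemma pd0R_zero (hσ2 : σ ^ 2 ≠ 0)
    (hR : ∀ x : Fin 3 → ℝ, R x = -(μ / lam) * norm3 x
      + (lam / 2) * Real.log (x 0 ^ 2 + x 1 ^ 2)
      + σ ^ 2 * Real.arctan (x 1 / x 0)) (x : Fin 3 → ℝ) (ha : x 0 = 0) (hb : x 1 ≠ 0) :
    pd 0 R x = 0 := by
  have hq : (0:ℝ) ^ 2 + x 1 ^ 2 + x 2 ^ 2 ≠ 0 := by positivity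
  have hp : (0:ℝ) ^ 2 + x 1 ^ 2 ≠ 0 := by positivity
  have hfun : (fun s => R (Function.update x 0 s)) = fun s =>
      -(μ / lam) * Real.sqrt (s ^ 2 + x 1 ^ 2 + x 2 ^ 2)
      + (lam / 2) * Real.log (s ^ 2 + x 1 ^ 2)
      + σ ^ 2 * Real.arctan (x 1 / s) := by
    funext s; rw [hR]; simp [norm3]
  rw [pd, hfun, ha]
  apply deriv_zero_of_not_differentiableAt
  intro hdiff
  have h1 : HasDerivAt (fun s : ℝ => s ^ 2 + x 1 ^ 2 + x 2 ^ 2) (2 * 0) (0:ℝ) := by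
    simpa using ((hasDerivAt_pow 2 (0:ℝ)).add_const (x 1 ^ 2)).add_const (x 2 ^ 2)
  have h2 : HasDerivAt (fun s : ℝ => s ^ 2 + x 1 ^ 2) (2 * 0) (0:ℝ) := by
    simpa using (hasDerivAt_pow 2 (0:ℝ)).add_const (x 1 ^ 2)
  have hg : DifferentiableAt ℝ (fun s : ℝ =>
      -(μ / lam) * Real.sqrt (s ^ 2 + x 1 ^ 2 + x 2 ^ 2)
      + (lam / 2) * Real.log (s ^ 2 + x 1 ^ 2)) 0 :=
    (((h1.sqrt hq).const_mul _).add ((h2.log hp).const_mul _)).differentiableAt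
  have harc : DifferentiableAt ℝ (fun s : ℝ => σ ^ 2 * Real.arctan (x 1 / s)) 0 := by
    have hsub := hdiff.sub hg
    have : (fun s : ℝ =>
        (-(μ / lam) * Real.sqrt (s ^ 2 + x 1 ^ 2 + x 2 ^ 2)
        + (lam / 2) * Real.log (s ^ 2 + x 1 ^ 2)
        + σ ^ 2 * Real.arctan (x 1 / s))
        - (-(μ / lam) * Real.sqrt (s ^ 2 + x 1 ^ 2 + x 2 ^ 2)
        + (lam / 2) * Real.log (s ^ 2 + x 1 ^ 2))) =
        fun s : ℝ => σ ^ 2 * Real.arctan (x 1 / s) := by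
      funext s; ring
    rw [← this]; exact hsub
  have harc2 : DifferentiableAt ℝ (fun s : ℝ => Real.arctan (x 1 / s)) 0 := by
    have := harc.const_mul (σ ^ 2)⁻¹
    have heq : (fun s : ℝ => (σ ^ 2)⁻¹ * (σ ^ 2 * Real.arctan (x 1 / s))) =
        fun s : ℝ => Real.arctan (x 1 / s) := by
      funext s; rw [← mul_assoc, inv_mul_cancel₀ hσ2, one_mul]
    rwa [heq] at this
  exact arctan_div_not_cont hb harc2.continuousAt

lemma pd0S_zero (hlam : lam ≠ 0)
    (hS : ∀ x : Fin 3 → ℝ, S x = lam * Real.arctan (x 1 / x 0)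
      - (σ ^ 2 / 2) * Real.log (x 0 ^ 2 + x 1 ^ 2)) (x : Fin 3 → ℝ) (ha : x 0 = 0) (hb : x 1 ≠ 0) :
    pd 0 S x = 0 := by
  have hp : (0:ℝ) ^ 2 + x 1 ^ 2 ≠ 0 := by positivity
  have hfun : (fun s => S (Function.update x 0 s)) = fun s =>
      lam * Real.arctan (x 1 / s) - (σ ^ 2 / 2) * Real.log (s ^ 2 + x 1 ^ 2) := by
    funext s; rw [hS]; simp
  rw [pd, hfun, ha]
  apply deriv_zero_of_not_differentiableAt
  intro hdiff
  have h2 : HasDerivAt (fun s : ℝ => s ^ 2 + x 1 ^ 2) (2 * 0) (0:ℝ) := by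
    simpa using (hasDerivAt_pow 2 (0:ℝ)).add_const (x 1 ^ 2)
  have hg : DifferentiableAt ℝ (fun s : ℝ => (σ ^ 2 / 2) * Real.log (s ^ 2 + x 1 ^ 2)) 0 :=
    ((h2.log hp).const_mul _).differentiableAt
  have harc : DifferentiableAt ℝ (fun s : ℝ => lam * Real.arctan (x 1 / s)) 0 := by
    have hsub := hdiff.add hg
    have : (fun s : ℝ =>
        (lam * Real.arctan (x 1 / s) - (σ ^ 2 / 2) * Real.log (s ^ 2 + x 1 ^ 2))
        + (σ ^ 2 / 2) * Real.log (s ^ 2 + x 1 ^ 2)) =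
        fun s : ℝ => lam * Real.arctan (x 1 / s) := by
      funext s; ring
    rw [← this]; exact hsub
  have harc2 : DifferentiableAt ℝ (fun s : ℝ => Real.arctan (x 1 / s)) 0 := by
    have := harc.const_mul lam⁻¹
    have heq : (fun s : ℝ => lam⁻¹ * (lam * Real.arctan (x 1 / s))) =
        fun s : ℝ => Real.arctan (x 1 / s) := by
      funext s; field_simp
    rwa [heq] at this
  exact arctan_div_not_cont hb harc2.continuousAt

lemma pd1R (hR : ∀ x : Fin 3 → ℝ, R x = -(μ / lam) * norm3 x
      + (lam / 2) * Real.log (x 0 ^ 2 + x 1 ^ 2)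
      + σ ^ 2 * Real.arctan (x 1 / x 0)) (x : Fin 3 → ℝ)
    (hp : x 0 ^ 2 + x 1 ^ 2 ≠ 0) :
    pd 1 R x = -(μ / lam) * (x 1 / norm3 x) + lam * x 1 / (x 0 ^ 2 + x 1 ^ 2)
      + σ ^ 2 * x 0 / (x 0 ^ 2 + x 1 ^ 2) := by
  have hq : x 0 ^ 2 + x 1 ^ 2 + x 2 ^ 2 ≠ 0 := by
    intro h; apply hp; nlinarith [sq_nonneg (x 0), sq_nonneg (x 1), sq_nonneg (x 2)]
  have hsq : Real.sqrt (x 0 ^ 2 + x 1 ^ 2 + x 2 ^ 2) ≠ 0 := by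
    have h0 : 0 ≤ x 0 ^ 2 + x 1 ^ 2 + x 2 ^ 2 := by positivity
    simpa [Real.sqrt_eq_zero'] using lt_of_le_of_ne h0 (Ne.symm hq)
  have hfun : (fun s => R (Function.update x 1 s)) = fun s =>
      -(μ / lam) * Real.sqrt (x 0 ^ 2 + s ^ 2 + x 2 ^ 2)
      + (lam / 2) * Real.log (x 0 ^ 2 + s ^ 2)
      + σ ^ 2 * Real.arctan (s / x 0) := by
    funext s; rw [hR]; simp [norm3]
  rw [pd, hfun]
  have h1 : HasDerivAt (fun s : ℝ => x 0 ^ 2 + s ^ 2 + x 2 ^ 2) (2 * x 1) (x 1) := by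
    simpa using (((hasDerivAt_pow 2 (x 1)).const_add (x 0 ^ 2)).add_const (x 2 ^ 2))
  have h2 : HasDerivAt (fun s : ℝ => x 0 ^ 2 + s ^ 2) (2 * x 1) (x 1) := by
    simpa using ((hasDerivAt_pow 2 (x 1)).const_add (x 0 ^ 2))
  by_cases ha : x 0 = 0
  · have hb : x 1 ≠ 0 := by
      intro hb; apply hp; rw [ha, hb]; ring
    have hfun2 : (fun s : ℝ =>
        -(μ / lam) * Real.sqrt (x 0 ^ 2 + s ^ 2 + x 2 ^ 2)
        + (lam / 2) * Real.log (x 0 ^ 2 + s ^ 2)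
        + σ ^ 2 * Real.arctan (s / x 0)) = fun s : ℝ =>
        -(μ / lam) * Real.sqrt (x 0 ^ 2 + s ^ 2 + x 2 ^ 2)
        + (lam / 2) * Real.log (x 0 ^ 2 + s ^ 2) + σ ^ 2 * 0 := by
      funext s; rw [ha]; simp
    rw [hfun2]
    have hd : HasDerivAt (fun s : ℝ =>
        -(μ / lam) * Real.sqrt (x 0 ^ 2 + s ^ 2 + x 2 ^ 2)
        + (lam / 2) * Real.log (x 0 ^ 2 + s ^ 2) + σ ^ 2 * 0)
        (-(μ / lam) * (2 * x 1 / (2 * Real.sqrt (x 0 ^ 2 + x 1 ^ 2 + x 2 ^ 2)))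
         + (lam / 2) * (2 * x 1 / (x 0 ^ 2 + x 1 ^ 2)) + 0) (x 1) :=
      ((((h1.sqrt hq).const_mul _).add ((h2.log hp).const_mul _))).add (hasDerivAt_const _ _)
    rw [hd.deriv, norm3, ha]
    field_simp
    ring
  · have h3 : HasDerivAt (fun s : ℝ => s / x 0) (1 / x 0) (x 1) := by
      simpa using (hasDerivAt_id (x 1)).div_const (x 0)
    have hd : HasDerivAt (fun s : ℝ =>
        -(μ / lam) * Real.sqrt (x 0 ^ 2 + s ^ 2 + x 2 ^ 2)
        + (lam / 2) * Real.log (x 0 ^ 2 + s ^ 2)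
        + σ ^ 2 * Real.arctan (s / x 0))
        (-(μ / lam) * (2 * x 1 / (2 * Real.sqrt (x 0 ^ 2 + x 1 ^ 2 + x 2 ^ 2)))
         + (lam / 2) * (2 * x 1 / (x 0 ^ 2 + x 1 ^ 2))
         + σ ^ 2 * (1 / (1 + (x 1 / x 0) ^ 2) * (1 / x 0))) (x 1) :=
      (((h1.sqrt hq).const_mul _).add ((h2.log hp).const_mul _)).add (h3.arctan.const_mul _)
    rw [hd.deriv, norm3]
    have h1px : 1 + (x 1 / x 0) ^ 2 ≠ 0 := by positivity
    field_simp

lemma pd1S (hS : ∀ x : Fin 3 → ℝ, S x = lam * Real.arctan (x 1 / x 0)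
      - (σ ^ 2 / 2) * Real.log (x 0 ^ 2 + x 1 ^ 2)) (x : Fin 3 → ℝ)
    (hp : x 0 ^ 2 + x 1 ^ 2 ≠ 0) :
    pd 1 S x = lam * x 0 / (x 0 ^ 2 + x 1 ^ 2) - σ ^ 2 * x 1 / (x 0 ^ 2 + x 1 ^ 2) := by
  have hfun : (fun s => S (Function.update x 1 s)) = fun s =>
      lam * Real.arctan (s / x 0) - (σ ^ 2 / 2) * Real.log (x 0 ^ 2 + s ^ 2) := by
    funext s; rw [hS]; simp
  rw [pd, hfun]
  have h2 : HasDerivAt (fun s : ℝ => x 0 ^ 2 + s ^ 2) (2 * x 1) (x 1) := by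
    simpa using ((hasDerivAt_pow 2 (x 1)).const_add (x 0 ^ 2))
  by_cases ha : x 0 = 0
  · have hb : x 1 ≠ 0 := by
      intro hb; apply hp; rw [ha, hb]; ring
    have hfun2 : (fun s : ℝ =>
        lam * Real.arctan (s / x 0) - (σ ^ 2 / 2) * Real.log (x 0 ^ 2 + s ^ 2)) = fun s : ℝ =>
        lam * 0 - (σ ^ 2 / 2) * Real.log (x 0 ^ 2 + s ^ 2) := by
      funext s; rw [ha]; simp
    rw [hfun2]
    have hd : HasDerivAt (fun s : ℝ => lam * 0 - (σ ^ 2 / 2) * Real.log (x 0 ^ 2 + s ^ 2))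
        (0 - (σ ^ 2 / 2) * (2 * x 1 / (x 0 ^ 2 + x 1 ^ 2))) (x 1) :=
      (hasDerivAt_const _ _).sub ((h2.log hp).const_mul _)
    rw [hd.deriv, ha]
    field_simp
    ring
  · have h3 : HasDerivAt (fun s : ℝ => s / x 0) (1 / x 0) (x 1) := by
      simpa using (hasDerivAt_id (x 1)).div_const (x 0)
    have hd : HasDerivAt (fun s : ℝ =>
        lam * Real.arctan (s / x 0) - (σ ^ 2 / 2) * Real.log (x 0 ^ 2 + s ^ 2))
        (lam * (1 / (1 + (x 1 / x 0) ^ 2) * (1 / x 0))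
         - (σ ^ 2 / 2) * (2 * x 1 / (x 0 ^ 2 + x 1 ^ 2))) (x 1) :=
      (h3.arctan.const_mul _).sub ((h2.log hp).const_mul _)
    rw [hd.deriv]
    have h1px : 1 + (x 1 / x 0) ^ 2 ≠ 0 := by positivity
    field_simp

lemma pd2R (hR : ∀ x : Fin 3 → ℝ, R x = -(μ / lam) * norm3 x
      + (lam / 2) * Real.log (x 0 ^ 2 + x 1 ^ 2)
      + σ ^ 2 * Real.arctan (x 1 / x 0)) (x : Fin 3 → ℝ)
    (hp : x 0 ^ 2 + x 1 ^ 2 ≠ 0) :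
    pd 2 R x = -(μ / lam) * (x 2 / norm3 x) := by
  have hq : x 0 ^ 2 + x 1 ^ 2 + x 2 ^ 2 ≠ 0 := by
    intro h; apply hp; nlinarith [sq_nonneg (x 0), sq_nonneg (x 1), sq_nonneg (x 2)]
  have hfun : (fun s => R (Function.update x 2 s)) = fun s =>
      -(μ / lam) * Real.sqrt (x 0 ^ 2 + x 1 ^ 2 + s ^ 2)
      + ((lam / 2) * Real.log (x 0 ^ 2 + x 1 ^ 2)
      + σ ^ 2 * Real.arctan (x 1 / x 0)) := by
    funext s; rw [hR]; simp [norm3]; ring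
  rw [pd, hfun]
  have h1 : HasDerivAt (fun s : ℝ => x 0 ^ 2 + x 1 ^ 2 + s ^ 2) (2 * x 2) (x 2) := by
    simpa using ((hasDerivAt_pow 2 (x 2)).const_add (x 0 ^ 2 + x 1 ^ 2))
  have hd : HasDerivAt (fun s : ℝ =>
      -(μ / lam) * Real.sqrt (x 0 ^ 2 + x 1 ^ 2 + s ^ 2)
      + ((lam / 2) * Real.log (x 0 ^ 2 + x 1 ^ 2)
      + σ ^ 2 * Real.arctan (x 1 / x 0)))
      (-(μ / lam) * (2 * x 2 / (2 * Real.sqrt (x 0 ^ 2 + x 1 ^ 2 + x 2 ^ 2)))) (x 2) :=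
    (((h1.sqrt hq).const_mul _)).add_const _
  rw [hd.deriv, norm3]
  ring

lemma pd2S (hS : ∀ x : Fin 3 → ℝ, S x = lam * Real.arctan (x 1 / x 0)
      - (σ ^ 2 / 2) * Real.log (x 0 ^ 2 + x 1 ^ 2)) (x : Fin 3 → ℝ) :
    pd 2 S x = 0 := by
  have hfun : (fun s => S (Function.update x 2 s)) = fun _ =>
      lam * Real.arctan (x 1 / x 0) - (σ ^ 2 / 2) * Real.log (x 0 ^ 2 + x 1 ^ 2) := by
    funext s; rw [hS]; simp
  rw [pd, hfun, deriv_const]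

lemma dot_eq (hlam : lam ≠ 0) (hσ2 : σ ^ 2 ≠ 0)
    (hR : ∀ x : Fin 3 → ℝ, R x = -(μ / lam) * norm3 x
      + (lam / 2) * Real.log (x 0 ^ 2 + x 1 ^ 2)
      + σ ^ 2 * Real.arctan (x 1 / x 0))
    (hS : ∀ x : Fin 3 → ℝ, S x = lam * Real.arctan (x 1 / x 0)
      - (σ ^ 2 / 2) * Real.log (x 0 ^ 2 + x 1 ^ 2))
    (x : Fin 3 → ℝ) (hp : x 0 ^ 2 + x 1 ^ 2 ≠ 0) :
    x 0 * (pd 0 R x + pd 0 S x) + x 1 * (pd 1 R x + pd 1 S x)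
      + x 2 * (pd 2 R x + pd 2 S x)
      = (lam - σ ^ 2) - (μ / lam) * norm3 x := by
  have hq : 0 < x 0 ^ 2 + x 1 ^ 2 + x 2 ^ 2 := by
    rcases lt_of_le_of_ne (by positivity) (Ne.symm hp) with h
    nlinarith [sq_nonneg (x 2)]
  have hr : 0 < norm3 x := Real.sqrt_pos.2 hq
  have hr2 : norm3 x ^ 2 = x 0 ^ 2 + x 1 ^ 2 + x 2 ^ 2 := Real.sq_sqrt hq.le
  rw [pd1R hR x hp, pd1S hS x hp, pd2R hR x hp, pd2S hS x]
  have hn : norm3 x ≠ 0 := hr.ne'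
  by_cases ha : x 0 = 0
  · have hb : x 1 ≠ 0 := by
      intro hb; apply hp; rw [ha, hb]; ring
    rw [pd0R_zero hσ2 hR x ha hb, pd0S_zero hlam hS x ha hb, ha]
    rw [ha] at hr2
    exact alg0 hn hb hlam hr2
  · rw [pd0R hR x ha, pd0S hS x ha]
    exact alg hn hp hlam hr2
end

theorem stmt_15 (μ lam σ : ℝ) (hμ : 0 < μ) (hσ : 0 < σ ^ 2) (hsl : σ ^ 2 < lam)
    (R S : (Fin 3 → ℝ) → ℝ)
    (hR : ∀ x : Fin 3 → ℝ, R x = -(μ / lam) * norm3 x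
      + (lam / 2) * Real.log (x 0 ^ 2 + x 1 ^ 2)
      + σ ^ 2 * Real.arctan (x 1 / x 0))
    (hS : ∀ x : Fin 3 → ℝ, S x = lam * Real.arctan (x 1 / x 0)
      - (σ ^ 2 / 2) * Real.log (x 0 ^ 2 + x 1 ^ 2))
    (X : ℝ → Fin 3 → ℝ)
    (hdom : ∀ t, (X t 0) ^ 2 + (X t 1) ^ 2 ≠ 0)
    (hX : ∀ t, HasDerivAt X (fun i => pd i R (X t) + pd i S (X t)) t)
    (hr0 : 0 < norm3 (X 0)) :
    (∀ t, HasDerivAt (fun s => norm3 (X s))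
        ((lam * (lam - σ ^ 2) - μ * norm3 (X t)) / (lam * norm3 (X t))) t) ∧
    Filter.Tendsto (fun t => norm3 (X t)) Filter.atTop
      (nhds (lam * (lam - σ ^ 2) / μ)) := by
  have hlam : (0:ℝ) < lam := lt_trans hσ hsl
  have hlam' : lam ≠ 0 := hlam.ne'
  have hqpos : ∀ t, 0 < (X t 0) ^ 2 + (X t 1) ^ 2 + (X t 2) ^ 2 := by
    intro t
    have h1 : 0 < (X t 0) ^ 2 + (X t 1) ^ 2 :=
      lt_of_le_of_ne (by positivity) (Ne.symm (hdom t))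
    nlinarith [sq_nonneg (X t 2)]
  have hrpos : ∀ t, 0 < norm3 (X t) := fun t => Real.sqrt_pos.2 (hqpos t)
  -- Part 1
  have part1 : ∀ t, HasDerivAt (fun s => norm3 (X s))
      ((lam * (lam - σ ^ 2) - μ * norm3 (X t)) / (lam * norm3 (X t))) t := by
    intro t
    have hXi : ∀ i, HasDerivAt (fun s => X s i) (pd i R (X t) + pd i S (X t)) t :=
      fun i => (hasDerivAt_pi.1 (hX t)) i
    have hQ : HasDerivAt (fun s => (X s 0) ^ 2 + (X s 1) ^ 2 + (X s 2) ^ 2)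
        (2 * X t 0 ^ 1 * (pd 0 R (X t) + pd 0 S (X t))
         + 2 * X t 1 ^ 1 * (pd 1 R (X t) + pd 1 S (X t))
         + 2 * X t 2 ^ 1 * (pd 2 R (X t) + pd 2 S (X t))) t := by
      exact (((hXi 0).pow 2).add ((hXi 1).pow 2)).add ((hXi 2).pow 2)
    have hd := hQ.sqrt (hqpos t).ne'
    have hval : (2 * X t 0 ^ 1 * (pd 0 R (X t) + pd 0 S (X t))
         + 2 * X t 1 ^ 1 * (pd 1 R (X t) + pd 1 S (X t))
         + 2 * X t 2 ^ 1 * (pd 2 R (X t) + pd 2 S (X t)))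
         / (2 * Real.sqrt ((X t 0) ^ 2 + (X t 1) ^ 2 + (X t 2) ^ 2))
         = (lam * (lam - σ ^ 2) - μ * norm3 (X t)) / (lam * norm3 (X t)) := by
      have hdot := dot_eq hlam' hσ.ne' hR hS (X t) (hdom t)
      have hrn : Real.sqrt ((X t 0) ^ 2 + (X t 1) ^ 2 + (X t 2) ^ 2) = norm3 (X t) := rfl
      rw [hrn]
      have hne : norm3 (X t) ≠ 0 := (hrpos t).ne'
      rw [div_eq_div_iff (by positivity) (by positivity)]
      have expand : 2 * X t 0 ^ 1 * (pd 0 R (X t) + pd 0 S (X t))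
         + 2 * X t 1 ^ 1 * (pd 1 R (X t) + pd 1 S (X t))
         + 2 * X t 2 ^ 1 * (pd 2 R (X t) + pd 2 S (X t))
         = 2 * ((X t 0) * (pd 0 R (X t) + pd 0 S (X t))
            + (X t 1) * (pd 1 R (X t) + pd 1 S (X t))
            + (X t 2) * (pd 2 R (X t) + pd 2 S (X t))) := by ring
      rw [expand, hdot]
      field_simp
    rw [hval] at hd
    exact hd
  refine ⟨part1, ?_⟩
  -- Part 2 : convergence
  set r : ℝ → ℝ := fun t => norm3 (X t) with hrdef
  set c : ℝ := lam * (lam - σ ^ 2) with hcdef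
  have hcpos : 0 < c := by
    have : 0 < lam - σ ^ 2 := by linarith
    positivity
  set rs : ℝ := c / μ with hrsdef
  have hrspos : 0 < rs := by positivity
  have hcrs : c = μ * rs := by rw [hrsdef]; field_simp
  set h : ℝ → ℝ := fun t => (r t - rs) ^ 2 with hhdef
  have hh : ∀ t, HasDerivAt h (2 * (r t - rs) * ((c - μ * r t) / (lam * r t))) t := by
    intro t
    have := ((part1 t).sub_const rs).pow 2
    have h' := this
    simp [mul_comm, mul_assoc, mul_left_comm] at h'
    have e : (r t - rs) * ((c - μ * norm3 (X t)) / (lam * norm3 (X t)) * 2)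
        = 2 * (r t - rs) * ((c - μ * r t) / (lam * r t)) := by
      simp only [hrdef]; ring
    exact h'.congr_deriv e
  have hderneg : ∀ t, deriv h t = -(2 * μ * (r t - rs) ^ 2 / (lam * r t)) := by
    intro t
    rw [(hh t).deriv, hcrs]
    have hne : r t ≠ 0 := (hrpos t).ne'
    field_simp
    ring
  have hhle : ∀ t, deriv h t ≤ 0 := by
    intro t
    rw [hderneg t]
    have : 0 ≤ 2 * μ * (r t - rs) ^ 2 / (lam * r t) := by
      apply div_nonneg
      · positivity
      · exact (mul_pos hlam (hrpos t)).le
    linarith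
  have hdiffh : Differentiable ℝ h := fun t => (hh t).differentiableAt
  have hanti : Antitone h := antitone_of_deriv_nonpos hdiffh hhle
  set d : ℝ := |r 0 - rs| with hddef
  set M : ℝ := rs + d with hMdef
  have hMpos : 0 < M := by
    have : 0 ≤ d := abs_nonneg _
    linarith
  have hrleM : ∀ t, 0 ≤ t → r t ≤ M := by
    intro t ht
    have h1 : h t ≤ h 0 := hanti ht
    have h2 : h 0 = d ^ 2 := by rw [hhdef, hddef]; simp [sq_abs]
    have h3 : (r t - rs) ^ 2 ≤ d ^ 2 := by rw [← h2]; exact h1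
    have hd0 : 0 ≤ d := abs_nonneg _
    nlinarith
  set k : ℝ := 2 * μ / (lam * M) with hkdef
  have hkpos : 0 < k := by positivity
  set g : ℝ → ℝ := fun t => h t * Real.exp (k * t) with hgdef
  have hgd : ∀ t, HasDerivAt g (deriv h t * Real.exp (k * t)
      + h t * (Real.exp (k * t) * k)) t := by
    intro t
    have he : HasDerivAt (fun s : ℝ => Real.exp (k * s)) (Real.exp (k * t) * k) t := by
      have : HasDerivAt (fun s : ℝ => k * s) k t := by
        simpa using (hasDerivAt_id t).const_mul k
      simpa using this.exp
    exact ((hh t).deriv ▸ (hdiffh t).hasDerivAt.mul he)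
  have hgderiv : ∀ t, 0 ≤ t → deriv g t ≤ 0 := by
    intro t ht
    rw [(hgd t).deriv, hderneg t]
    have hrt := hrpos t
    have hle : k ≤ 2 * μ / (lam * r t) := by
      apply div_le_div_of_nonneg_left (by positivity) (by positivity)
      have := hrleM t ht
      nlinarith
    have hexp : 0 < Real.exp (k * t) := Real.exp_pos _
    have hh0 : 0 ≤ h t := sq_nonneg _
    have key : h t * (Real.exp (k * t) * k) ≤ (2 * μ * (r t - rs) ^ 2 / (lam * r t)) * Real.exp (k * t) := by
      have h1 : h t * k ≤ h t * (2 * μ / (lam * r t)) := by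
        exact mul_le_mul_of_nonneg_left hle hh0
      have h2 : h t * (2 * μ / (lam * r t)) = 2 * μ * (r t - rs) ^ 2 / (lam * r t) := by
        rw [hhdef]; ring
      calc h t * (Real.exp (k * t) * k) = (h t * k) * Real.exp (k * t) := by ring
        _ ≤ (h t * (2 * μ / (lam * r t))) * Real.exp (k * t) :=
            mul_le_mul_of_nonneg_right h1 hexp.le
        _ = (2 * μ * (r t - rs) ^ 2 / (lam * r t)) * Real.exp (k * t) := by rw [h2]
    nlinarith [key]
  have hganti : AntitoneOn g (Set.Ici (0:ℝ)) := by
    apply antitoneOn_of_deriv_nonpos (convex_Ici 0)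
    · exact (Continuous.continuousOn (by
        exact (hdiffh.continuous.mul (Real.continuous_exp.comp (continuous_const.mul continuous_id)))))
    · intro t _
      exact ((hgd t).differentiableAt).differentiableWithinAt
    · intro t ht
      rw [interior_Ici] at ht
      exact hgderiv t (le_of_lt ht)
  have hbound : ∀ t, 0 ≤ t → h t ≤ h 0 * Real.exp (-(k * t)) := by
    intro t ht
    have h1 : g t ≤ g 0 := hganti (Set.self_mem_Ici) (Set.mem_Ici.2 ht) ht
    have h2 : g 0 = h 0 := by simp [hgdef]
    have h3 : h t * Real.exp (k * t) ≤ h 0 := by rw [← h2]; exact h1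
    have hexp : 0 < Real.exp (k * t) := Real.exp_pos _
    rw [Real.exp_neg]
    calc h t = h t * Real.exp (k * t) * (Real.exp (k * t))⁻¹ := by
          field_simp
      _ ≤ h 0 * (Real.exp (k * t))⁻¹ := by
          apply mul_le_mul_of_nonneg_right h3 (by positivity)
  have htend0 : Filter.Tendsto h Filter.atTop (nhds 0) := by
    have hupper : Filter.Tendsto (fun t => h 0 * Real.exp (-(k * t))) Filter.atTop (nhds 0) := by
      have h1 : Filter.Tendsto (fun t : ℝ => k * t) Filter.atTop Filter.atTop :=
        Filter.Tendsto.const_mul_atTop hkpos Filter.tendsto_id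
      have h2 : Filter.Tendsto (fun t : ℝ => Real.exp (-(k * t))) Filter.atTop (nhds 0) :=
        Real.tendsto_exp_neg_atTop_nhds_zero.comp h1
      simpa using h2.const_mul (h 0)
    apply tendsto_of_tendsto_of_tendsto_of_le_of_le' tendsto_const_nhds hupper
    · exact Filter.Eventually.of_forall (fun t => sq_nonneg _)
    · filter_upwards [Filter.eventually_ge_atTop (0:ℝ)] with t ht
      exact hbound t ht
  have : Filter.Tendsto r Filter.atTop (nhds rs) := by
    rw [tendsto_iff_dist_tendsto_zero]
    have hsq : Filter.Tendsto (fun t => Real.sqrt (h t)) Filter.atTop (nhds 0) := by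
      have := (Real.continuous_sqrt.tendsto 0).comp htend0
      simpa [Function.comp_def] using this
    have : (fun t => dist (r t) rs) = fun t => Real.sqrt (h t) := by
      funext t
      rw [Real.dist_eq, hhdef]
      exact (Real.sqrt_sq_eq_abs _).symm
    rw [this]
    exact hsq
  exact this
end

section
/- Let f(x) = a₀x⁴+4a₁x³+6a₂x²+4a₃x+a₄ with x₀ a simple real root (f(x₀) = 0, f'(x₀) ≠ 0). Under the substitution x − x₀ = f'(x₀)/(4(y − f''(x₀)/24)), the expression (y − f''(x₀)/24)⁴·f(x) becomes the cubic (f'(x₀)/4)²·(4y³ − g₂y − g₃) in y, where g₂ = a₀a₄ − 4a₁a₃ + 3a₂² and g₃ = a₀a₂a₄ + 2a₁a₂a₃ − a₂³ − a₀a₃² − a₁²a₄. -/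
set_option maxHeartbeats 2000000 in
theorem stmt_18 (a₀ a₁ a₂ a₃ a₄ x₀ : ℝ)
    (f : ℝ → ℝ)
    (hf : ∀ x, f x = a₀ * x ^ 4 + 4 * a₁ * x ^ 3 + 6 * a₂ * x ^ 2 + 4 * a₃ * x + a₄)
    (hroot : f x₀ = 0) (hsimple : deriv f x₀ ≠ 0)
    (g₂ g₃ : ℝ)
    (hg₂ : g₂ = a₀ * a₄ - 4 * a₁ * a₃ + 3 * a₂ ^ 2)
    (hg₃ : g₃ = a₀ * a₂ * a₄ + 2 * a₁ * a₂ * a₃ - a₂ ^ 3 - a₀ * a₃ ^ 2 - a₁ ^ 2 * a₄) :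
    ∀ x y : ℝ, y ≠ deriv (deriv f) x₀ / 24 →
      x - x₀ = deriv f x₀ / (4 * (y - deriv (deriv f) x₀ / 24)) →
      (y - deriv (deriv f) x₀ / 24) ^ 4 * f x
        = (deriv f x₀ / 4) ^ 2 * (4 * y ^ 3 - g₂ * y - g₃) := by
  have hfe : f = fun x => a₀ * x ^ 4 + 4 * a₁ * x ^ 3 + 6 * a₂ * x ^ 2 + 4 * a₃ * x + a₄ :=
    funext hf
  have hd1 : deriv f = fun x => 4 * a₀ * x ^ 3 + 12 * a₁ * x ^ 2 + 12 * a₂ * x + 4 * a₃ := by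
    ext x
    rw [hfe]
    have h1 := (hasDerivAt_pow 4 x).const_mul a₀
    have h2 := (hasDerivAt_pow 3 x).const_mul (4*a₁)
    have h3 := (hasDerivAt_pow 2 x).const_mul (6*a₂)
    have h4 := (hasDerivAt_id x).const_mul (4*a₃)
    have h := (((h1.add h2).add h3).add h4).add_const a₄
    have h' : HasDerivAt (fun x : ℝ => a₀ * x ^ 4 + 4 * a₁ * x ^ 3 + 6 * a₂ * x ^ 2
        + 4 * a₃ * x + a₄) (4 * a₀ * x ^ 3 + 12 * a₁ * x ^ 2 + 12 * a₂ * x + 4 * a₃) x := by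
      refine h.congr_deriv ?_
      push_cast
      ring
    exact h'.deriv
  have hd2 : deriv (deriv f) x₀ = 12 * a₀ * x₀ ^ 2 + 24 * a₁ * x₀ + 12 * a₂ := by
    rw [hd1]
    have h1 := (hasDerivAt_pow 3 x₀).const_mul (4*a₀)
    have h2 := (hasDerivAt_pow 2 x₀).const_mul (12*a₁)
    have h3 := (hasDerivAt_id x₀).const_mul (12*a₂)
    have h := ((h1.add h2).add h3).add_const (4*a₃)
    have h' : HasDerivAt (fun x : ℝ => 4 * a₀ * x ^ 3 + 12 * a₁ * x ^ 2 + 12 * a₂ * x + 4 * a₃)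
        (12 * a₀ * x₀ ^ 2 + 24 * a₁ * x₀ + 12 * a₂) x₀ := by
      refine h.congr_deriv ?_
      push_cast
      ring
    exact h'.deriv
  have hA : deriv f x₀ = 4 * a₀ * x₀ ^ 3 + 12 * a₁ * x₀ ^ 2 + 12 * a₂ * x₀ + 4 * a₃ := by
    rw [hd1]
  have ha₄ : a₄ = -(a₀ * x₀ ^ 4 + 4 * a₁ * x₀ ^ 3 + 6 * a₂ * x₀ ^ 2 + 4 * a₃ * x₀) := by
    have := hf x₀
    rw [hroot] at this
    linarith
  intro x y hy hx
  rw [hf x, hg₂, hg₃, ha₄, hA, hd2]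
  rw [hA, hd2] at hx
  rw [hd2] at hy
  obtain ⟨t, ht0, hyt⟩ : ∃ t : ℝ, t ≠ 0 ∧ y = t + (12 * a₀ * x₀ ^ 2 + 24 * a₁ * x₀ + 12 * a₂) / 24 :=
    ⟨y - (12 * a₀ * x₀ ^ 2 + 24 * a₁ * x₀ + 12 * a₂) / 24, sub_ne_zero.mpr hy, by ring⟩
  have hx' : x = x₀ + (4 * a₀ * x₀ ^ 3 + 12 * a₁ * x₀ ^ 2 + 12 * a₂ * x₀ + 4 * a₃) / (4 * t) := by
    rw [hyt] at hx
    have : t + (12 * a₀ * x₀ ^ 2 + 24 * a₁ * x₀ + 12 * a₂) / 24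
        - (12 * a₀ * x₀ ^ 2 + 24 * a₁ * x₀ + 12 * a₂) / 24 = t := by ring
    rw [this] at hx
    linarith
  rw [hx', hyt]
  have h4t : (4 : ℝ) * t ≠ 0 := by positivity
  field_simp
  ring
end
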